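/- Let m ≥ 0 and d ≥ 1 be integers and let L = L_{2d}^{(m)} = 2U ⊕ mE8(−1) ⊕ ⟨−2d⟩. Every primitive vector r ∈ L with (r,r) = −2 has div(r) = 1 or div(r) = 2. Moreover, there exists a primitive vector r ∈ L with (r,r) = −2 and div(r) = 2 if and only if d ≡ 1 (mod 4). -/

import Mathlib

/-- The hyperbolic plane `U`, with Gram matrix `[[0,1],[1,0]]`. -/
def gramU : Matrix (Fin 2) (Fin 2) ℤ := !![0, 1; 1, 0]

/-- The Gram matrix of `E₈(−1)`: the negated Cartan (= Gram) matrix of the `E₈` root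
lattice. -/
def gramE8neg : Matrix (Fin 8) (Fin 8) ℤ := -CartanMatrix.E₈

/-- The Gram matrix of `m` orthogonal copies of `E₈(−1)`. -/
def gramE8copies (m : ℕ) : Matrix (Fin m × Fin 8) (Fin m × Fin 8) ℤ :=
  Matrix.of fun p q => if p.1 = q.1 then gramE8neg p.2 q.2 else 0

/-- Index set for `II_{2,8m+2} = 2U ⊕ mE₈(−1)`. -/
abbrev IdxII (m : ℕ) : Type := (Fin 2 ⊕ Fin 2) ⊕ Fin m × Fin 8

/-- The Gram matrix of the even unimodular lattice `II_{2,8m+2} = 2U ⊕ mE₈(−1)`. -/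
def gramII (m : ℕ) : Matrix (IdxII m) (IdxII m) ℤ :=
  Matrix.fromBlocks (Matrix.fromBlocks gramU 0 0 gramU) 0 0 (gramE8copies m)

/-- Index set for `L_{2d}^{(m)} = 2U ⊕ mE₈(−1) ⊕ ⟨−2d⟩`. -/
abbrev IdxL (m : ℕ) : Type := IdxII m ⊕ Fin 1

/-- The Gram matrix of `L_{2d}^{(m)} = 2U ⊕ mE₈(−1) ⊕ ⟨−2d⟩`. -/
def gramL (m d : ℕ) : Matrix (IdxL m) (IdxL m) ℤ :=
  Matrix.fromBlocks (gramII m) 0 0 !![-(2 * (d : ℤ))]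

/-- The bilinear form on `ι → ℤ` associated to a Gram matrix `G`:
`⟨x, y⟩ = ∑ i j, x i * G i j * y j`. -/
def bilin {ι : Type} [Fintype ι] (G : Matrix ι ι ℤ) (x y : ι → ℤ) : ℤ :=
  ∑ i, ∑ j, x i * G i j * y j

/-- `r` is primitive: `ℚr ∩ L = ℤr`, equivalently `r` is not a nontrivial integer
multiple of a lattice vector. -/
def IsPrim {ι : Type} (r : ι → ℤ) : Prop :=
  ∀ (k : ℤ) (x : ι → ℤ), r = k • x → IsUnit k

/-- `s = div(r)`: the positive generator of the ideal `{(r,l) : l ∈ L} ⊆ ℤ`. -/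
def IsDivisorOf {ι : Type} [Fintype ι] (G : Matrix ι ι ℤ) (r : ι → ℤ) (s : ℤ) : Prop :=
  0 < s ∧ (∀ l : ι → ℤ, s ∣ bilin G r l) ∧ ∃ l : ι → ℤ, bilin G r l = s

/-- Two lattices, given as `ℤ`-modules with `ℤ`-valued bilinear forms, are isometric. -/
def LatIsometric {M N : Type} [AddCommGroup M] [Module ℤ M] [AddCommGroup N] [Module ℤ N]
    (BM : M → M → ℤ) (BN : N → N → ℤ) : Prop :=
  ∃ e : M ≃ₗ[ℤ] N, ∀ x y : M, BN (e x) (e y) = BM x y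

/-- The orthogonal complement `K_r = {x : (x,r) = 0}` of `r`, as a `ℤ`-submodule. -/
def orthC {ι : Type} [Fintype ι] (G : Matrix ι ι ℤ) (r : ι → ℤ) :
    Submodule ℤ (ι → ℤ) where
  carrier := {x | bilin G x r = 0}
  zero_mem' := by simp [bilin]
  add_mem' := by
    intro a b ha hb
    simp only [Set.mem_setOf_eq, bilin, Pi.add_apply, add_mul, Finset.sum_add_distrib] at *
    rw [ha, hb, add_zero]
  smul_mem' := by
    intro c x hx
    simp only [Set.mem_setOf_eq, bilin, Pi.smul_apply, smul_eq_mul, mul_assoc,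
      ← Finset.mul_sum] at *
    rw [hx, mul_zero]

/- ===================== auxiliary lemmas ===================== -/

def gramE8negInv : Matrix (Fin 8) (Fin 8) ℤ :=
  -!![4, 5, 7, 10, 8, 6, 4, 2; 5, 8, 10, 15, 12, 9, 6, 3; 7, 10, 14, 20, 16, 12, 8, 4;
     10, 15, 20, 30, 24, 18, 12, 6; 8, 12, 16, 24, 20, 15, 10, 5; 6, 9, 12, 18, 15, 12, 8, 4;
     4, 6, 8, 12, 10, 8, 6, 3; 2, 3, 4, 6, 5, 4, 3, 2]

lemma e8_mul_inv : gramE8neg * gramE8negInv = 1 := by decide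

lemma e8_two_dvd (v : Fin 8 → ℤ) (h : ∀ t, 2 ∣ ∑ s, v s * gramE8neg s t) :
    ∀ q, 2 ∣ v q := by
  intro q
  have key : ∑ t, (∑ s, v s * gramE8neg s t) * gramE8negInv t q = v q := by
    calc ∑ t, (∑ s, v s * gramE8neg s t) * gramE8negInv t q
        = ∑ s, v s * ∑ t, gramE8neg s t * gramE8negInv t q := by
          simp only [Finset.sum_mul, Finset.mul_sum, mul_assoc]
          rw [Finset.sum_comm]
      _ = ∑ s, v s * (gramE8neg * gramE8negInv) s q := by simp [Matrix.mul_apply]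
      _ = v q := by rw [e8_mul_inv]; simp [Matrix.one_apply]
  rw [← key]
  exact Finset.dvd_sum fun t _ => Dvd.dvd.mul_right (h t) _

lemma bilin_gramL_eq (m d : ℕ) (x y : IdxL m → ℤ) :
    bilin (gramL m d) x y =
      x (.inl (.inl (.inl 0))) * y (.inl (.inl (.inl 1))) +
      x (.inl (.inl (.inl 1))) * y (.inl (.inl (.inl 0))) +
      x (.inl (.inl (.inr 0))) * y (.inl (.inl (.inr 1))) +
      x (.inl (.inl (.inr 1))) * y (.inl (.inl (.inr 0))) +
      (∑ p : Fin m × Fin 8, ∑ q : Fin m × Fin 8,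
        x (.inl (.inr p)) * gramE8copies m p q * y (.inl (.inr q))) +
      -(2*(d:ℤ)) * x (.inr 0) * y (.inr 0) := by
  simp [bilin, Fintype.sum_sum_type, Fin.sum_univ_succ, gramL, gramII, gramU,
    Matrix.fromBlocks]
  ring

/-- An even symmetric block: `xᵀ G x` is even for `G = gramE8copies m`. -/
lemma e8copies_even (m : ℕ) (x : Fin m × Fin 8 → ℤ) :
    2 ∣ ∑ p : Fin m × Fin 8, ∑ q : Fin m × Fin 8, x p * gramE8copies m p q * x q := by
  have h0 : ((∑ p : Fin m × Fin 8, ∑ q : Fin m × Fin 8,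
      x p * gramE8copies m p q * x q : ℤ) : ZMod 2) = 0 := by
    push_cast
    rw [← Finset.sum_product']
    apply Finset.sum_involution (fun p _ => (p.2, p.1))
    · intro p _
      have hsym : gramE8copies m p.2 p.1 = gramE8copies m p.1 p.2 := by
        simp only [gramE8copies, Matrix.of_apply]
        have h8 : ∀ s t : Fin 8, gramE8neg s t = gramE8neg t s := by
          have hT : gramE8neg.transpose = gramE8neg := by decide
          exact fun s t => congrArg (fun M : Matrix (Fin 8) (Fin 8) ℤ => M t s) hT
        rcases eq_or_ne p.1.1 p.2.1 with h | h
        · simp [h, h8]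
        · simp [h, Ne.symm h]
      rw [hsym]; ring_nf
      simp [show (2 : ZMod 2) = 0 from rfl]
    · intro p _ hne hcontra
      apply hne
      have hp : p.1 = p.2 := congrArg Prod.snd hcontra
      have hdiag : gramE8copies m p.1 p.2 = -2 := by
        have h8 : ∀ t : Fin 8, gramE8neg t t = -2 := by decide
        simp [gramE8copies, ← hp, h8]
      rw [hdiag]
      simp [show ((-2 : ℤ) : ZMod 2) = 0 from by decide]
    · intro p _; exact Finset.mem_univ _
    · intro p _; rfl
  exact_mod_cast (ZMod.intCast_zmod_eq_zero_iff_dvd _ 2).mp h0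

/-- In `L = L_{2d}^{(m)} = 2U ⊕ mE₈(−1) ⊕ ⟨−2d⟩`, every primitive
vector `r` with `(r,r) = −2` has `div(r) = 1` or `div(r) = 2`; moreover there exists a
primitive vector `r` with `(r,r) = −2` and `div(r) = 2` if and only if `d ≡ 1 mod 4`. -/
theorem divisors_of_minus_two_vectors_in_L2d
    (m d : ℕ) (hd : 1 ≤ d) :
    (∀ r : IdxL m → ℤ, IsPrim r → bilin (gramL m d) r r = -2 →
      ∀ s : ℤ, IsDivisorOf (gramL m d) r s → s = 1 ∨ s = 2) ∧
    ((∃ r : IdxL m → ℤ, IsPrim r ∧ bilin (gramL m d) r r = -2 ∧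
        IsDivisorOf (gramL m d) r 2) ↔ d % 4 = 1) := by
  constructor
  · rintro r - hrr s ⟨hpos, hdvd, -⟩
    have h2 := hdvd r
    rw [hrr] at h2
    have h2' : s ∣ 2 := dvd_neg.mp h2
    have := Int.le_of_dvd (by norm_num) h2'
    omega
  constructor
  · rintro ⟨r, hprim, hrr, -, hdvd2, -⟩
    have ha : 2 ∣ r (.inl (.inl (.inl 0))) := by
      have h := hdvd2 (Pi.single (.inl (.inl (.inl 1))) 1)
      rw [bilin_gramL_eq] at h
      simpa [Pi.single_apply] using h
    have hb : 2 ∣ r (.inl (.inl (.inl 1))) := by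
      have h := hdvd2 (Pi.single (.inl (.inl (.inl 0))) 1)
      rw [bilin_gramL_eq] at h
      simpa [Pi.single_apply] using h
    have hc : 2 ∣ r (.inl (.inl (.inr 0))) := by
      have h := hdvd2 (Pi.single (.inl (.inl (.inr 1))) 1)
      rw [bilin_gramL_eq] at h
      simpa [Pi.single_apply] using h
    have he : 2 ∣ r (.inl (.inl (.inr 1))) := by
      have h := hdvd2 (Pi.single (.inl (.inl (.inr 0))) 1)
      rw [bilin_gramL_eq] at h
      simpa [Pi.single_apply] using h
    have hv : ∀ (k : Fin m) (t : Fin 8), 2 ∣ r (.inl (.inr (k, t))) := by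
      intro k
      refine e8_two_dvd (fun s => r (.inl (.inr (k, s)))) ?_
      intro t
      have h := hdvd2 (Pi.single (.inl (.inr (k, t))) 1)
      rw [bilin_gramL_eq] at h
      simp only [Pi.single_apply] at h
      simp at h
      convert h using 2
      calc ∑ s : Fin 8, r (.inl (.inr (k, s))) * gramE8neg s t
          = ∑ s : Fin 8, ∑ k' : Fin m,
              r (.inl (.inr (k', s))) * gramE8copies m (k', s) (k, t) := by
            refine Finset.sum_congr rfl fun s _ => ?_
            simp [gramE8copies, mul_ite, mul_zero, Finset.sum_ite_eq']
        _ = ∑ x : Fin m × Fin 8, r (.inl (.inr x)) * gramE8copies m x (k, t) := by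
            rw [Fintype.sum_prod_type, Finset.sum_comm]
    have hwodd : ¬ (2 ∣ r (.inr 0)) := by
      intro h2w
      have hall : ∀ i, 2 ∣ r i := by
        rintro (((i | i) | ⟨k, t⟩) | i)
        · fin_cases i
          · exact ha
          · exact hb
        · fin_cases i
          · exact hc
          · exact he
        · exact hv k t
        · rw [Subsingleton.elim i 0]; exact h2w
      have hr2 : r = (2 : ℤ) • fun i => r i / 2 := by
        funext i
        obtain ⟨c, hcc⟩ := hall i
        simp [hcc, Int.mul_ediv_cancel_left]
      have := hprim 2 _ hr2
      rw [Int.isUnit_iff] at this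
      omega
    rw [bilin_gramL_eq] at hrr
    have h8T : (8 : ℤ) ∣ ∑ p : Fin m × Fin 8, ∑ q : Fin m × Fin 8,
        r (.inl (.inr p)) * gramE8copies m p q * r (.inl (.inr q)) := by
      have hy : ∀ p : Fin m × Fin 8,
          r (.inl (.inr p)) = 2 * (r (.inl (.inr p)) / 2) := by
        intro p
        obtain ⟨c, hcc⟩ := hv p.1 p.2
        rw [Prod.mk.eta] at hcc
        rw [hcc]
        rw [Int.mul_ediv_cancel_left _ (by norm_num)]
      have hT4 : (∑ p : Fin m × Fin 8, ∑ q : Fin m × Fin 8,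
          r (.inl (.inr p)) * gramE8copies m p q * r (.inl (.inr q))) =
          4 * ∑ p : Fin m × Fin 8, ∑ q : Fin m × Fin 8,
            (r (.inl (.inr p)) / 2) * gramE8copies m p q * (r (.inl (.inr q)) / 2) := by
        rw [Finset.mul_sum]
        refine Finset.sum_congr rfl fun p _ => ?_
        rw [Finset.mul_sum]
        refine Finset.sum_congr rfl fun q _ => ?_
        conv_lhs => rw [hy p, hy q]
        ring
      obtain ⟨S, hS⟩ := e8copies_even m (fun p => r (.inl (.inr p)) / 2)
      rw [hT4, hS]
      exact ⟨S, by ring⟩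
    obtain ⟨a1, hA⟩ := ha
    obtain ⟨b1, hB⟩ := hb
    obtain ⟨c1, hC⟩ := hc
    obtain ⟨e1, hE⟩ := he
    obtain ⟨T1, hT⟩ := h8T
    obtain ⟨w1, hw⟩ : ∃ w1, r (.inr 0) = 2 * w1 + 1 := by
      rcases Int.even_or_odd (r (.inr 0)) with hE2 | hO
      · exact absurd hE2.two_dvd hwodd
      · exact hO
    rw [hA, hB, hC, hE, hT, hw] at hrr
    have key : 8 * (a1 * b1) + 8 * (c1 * e1) + 8 * T1 -
        8 * ((d : ℤ) * (w1 * w1 + w1)) - 2 * (d : ℤ) = -2 := by linear_combination hrr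
    set X := a1 * b1 + c1 * e1 + T1 - (d : ℤ) * (w1 * w1 + w1) with hX
    have hfin : 8 * X - 2 * (d : ℤ) = -2 := by rw [hX]; linarith [key]
    omega
  · intro hd4
    obtain ⟨k, hk⟩ : ∃ k : ℕ, d = 4 * k + 1 := ⟨d / 4, by omega⟩
    refine ⟨Sum.elim (Sum.elim (Sum.elim ![2 * (k : ℤ), 2] 0) 0) 1, ?_, ?_, ?_⟩
    · intro kk x hx
      have h1 : (1 : ℤ) = kk * x (.inr 0) := by
        have := congrFun hx (Sum.inr 0)
        simpa using this
      exact IsUnit.of_mul_eq_one _ h1.symm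
    · rw [bilin_gramL_eq]
      simp [hk]
      push_cast
      ring
    · refine ⟨by norm_num, fun l => ?_, ⟨Pi.single (.inl (.inl (.inl 0))) 1, ?_⟩⟩
      · rw [bilin_gramL_eq]
        simp
        exact ⟨(k : ℤ) * l (.inl (.inl (.inl 1))) + l (.inl (.inl (.inl 0))) -
          (d : ℤ) * l (.inr 0), by ring⟩
      · rw [bilin_gramL_eq]
        simp [Pi.single_apply]
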